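/- Lemma 3.3 (conservation of the L² norm): Let M_x and M_y be symmetric N×N real matrices, and let u : ℝ → (ℝ × ℝ) → (Fin N → ℝ) be a continuously differentiable function such that there is a compact set K ⊂ ℝ × ℝ with u(t, x) = 0 for all t and all x ∉ K, and such that u satisfies the first-order system ∂_t u + M_x · (∂_x u) + M_y · (∂_y u) = 0 pointwise. Then the function t ↦ ∫_{ℝ×ℝ} ‖u(t, (x,y))‖² d(x,y) is constant in t. -/

import Mathlib

open Matrix MeasureTheory

lemma integral_deriv_zero_of_support {f f' : ℝ → ℝ} (R : ℝ)
    (hd : ∀ x, HasDerivAt f (f' x) x)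
    (hc : Continuous f')
    (hz : ∀ x : ℝ, R < |x| → f x = 0) :
    ∫ x : ℝ, f' x = 0 := by
  set S : ℝ := |R| + 1 with hS
  have hRS : R < S := lt_of_le_of_lt (le_abs_self R) (by simp [hS])
  have hS0 : 0 < S := lt_of_le_of_lt (abs_nonneg R) (by simp [hS])
  have hfz : ∀ x : ℝ, R < |x| → f' x = 0 := by
    intro x hx
    have hopen : IsOpen {y : ℝ | R < |y|} := isOpen_lt continuous_const continuous_abs
    have hev : f =ᶠ[nhds x] (fun _ => (0:ℝ)) := by
      filter_upwards [hopen.mem_nhds hx] with y hy using hz y hy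
    exact ((hd x).congr_of_eventuallyEq hev.symm).unique (hasDerivAt_const x 0)
  have h1 : ∫ x : ℝ, f' x = ∫ x in Set.Ioc (-S) S, f' x := by
    refine (setIntegral_eq_integral_of_forall_compl_eq_zero ?_).symm
    intro x hx
    refine hfz x ?_
    simp only [Set.mem_Ioc, not_and_or, not_lt, not_le] at hx
    have h1 := neg_le_abs x
    have h2 := le_abs_self x
    rcases hx with h | h <;> linarith
  have h2 : ∫ x in Set.Ioc (-S) S, f' x = ∫ x in (-S)..S, f' x := by
    rw [intervalIntegral.integral_of_le (by linarith)]
  have h3 : ∫ x in (-S)..S, f' x = f S - f (-S) :=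
    intervalIntegral.integral_eq_sub_of_hasDerivAt (fun x _ => hd x)
      (hc.intervalIntegrable _ _)
  rw [h1, h2, h3, hz S (by rwa [abs_of_pos hS0]), hz (-S) (by rwa [abs_neg, abs_of_pos hS0]),
    sub_zero]

lemma dot_mulVec_symm {N : ℕ} {M : Matrix (Fin N) (Fin N) ℝ} (hM : Mᵀ = M)
    (a b : Fin N → ℝ) :
    ∑ i, a i * (M.mulVec b) i = ∑ i, b i * (M.mulVec a) i := by
  have : a ⬝ᵥ (M.mulVec b) = b ⬝ᵥ (M.mulVec a) := by
    rw [Matrix.dotProduct_mulVec, ← hM, Matrix.vecMul_transpose, hM, dotProduct_comm]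
  simpa [dotProduct] using this

lemma quad_hasDerivAt {N : ℕ} {M : Matrix (Fin N) (Fin N) ℝ} (hM : Mᵀ = M)
    {w : ℝ → Fin N → ℝ} {w' : Fin N → ℝ} {x : ℝ} (hw : HasDerivAt w w' x) :
    HasDerivAt (fun a => ∑ i, w a i * (M.mulVec (w a)) i)
      (2 * ∑ i, w x i * (M.mulVec w') i) x := by
  have hcomp : ∀ i, HasDerivAt (fun a => w a i) (w' i) x := fun i => hasDerivAt_pi.1 hw i
  have hterm : ∀ i : Fin N, HasDerivAt (fun a => w a i * (M.mulVec (w a)) i)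
      (w' i * (M.mulVec (w x)) i + w x i * (M.mulVec w') i) x := by
    intro i
    have hMv : HasDerivAt (fun a => (M.mulVec (w a)) i) ((M.mulVec w') i) x := by
      simp only [Matrix.mulVec, dotProduct]
      exact HasDerivAt.fun_sum fun j _ => (hcomp j).const_mul (M i j)
    exact (hcomp i).mul hMv
  have hsum := HasDerivAt.fun_sum (fun i (_ : i ∈ Finset.univ) => hterm i)
  refine hsum.congr_deriv ?_
  rw [Finset.sum_add_distrib, dot_mulVec_symm hM w' (w x), dot_mulVec_symm hM (w x) w']
  ring

lemma sq_sum_hasDerivAt {N : ℕ} {w : ℝ → Fin N → ℝ} {w' : Fin N → ℝ} {x : ℝ}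
    (hw : HasDerivAt w w' x) :
    HasDerivAt (fun a => ∑ i, (w a i) ^ 2) (2 * ∑ i, w x i * w' i) x := by
  have hcomp : ∀ i, HasDerivAt (fun a => w a i) (w' i) x := fun i => hasDerivAt_pi.1 hw i
  have hterm : ∀ i : Fin N, HasDerivAt (fun a => (w a i) ^ 2)
      (2 * (w x i * w' i)) x := by
    intro i
    have := ((hcomp i).fun_pow 2)
    simpa [mul_assoc] using this
  have hsum := HasDerivAt.fun_sum (fun i (_ : i ∈ Finset.univ) => hterm i)
  refine hsum.congr_deriv ?_
  rw [Finset.mul_sum]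

theorem PN_L2_norm_conservation (N : ℕ)
    (Mx My : Matrix (Fin N) (Fin N) ℝ)
    (hMx : Mxᵀ = Mx) (hMy : Myᵀ = My)
    (u : ℝ → ℝ × ℝ → (Fin N → ℝ))
    (hreg : ContDiff ℝ 1 (fun p : ℝ × (ℝ × ℝ) => u p.1 p.2))
    (K : Set (ℝ × ℝ)) (hK : IsCompact K)
    (hsupp : ∀ t : ℝ, ∀ x : ℝ × ℝ, x ∉ K → u t x = 0)
    (hPDE : ∀ t x y : ℝ,
      deriv (fun s => u s (x, y)) t
        + Mx.mulVec (deriv (fun a => u t (a, y)) x)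
        + My.mulVec (deriv (fun b => u t (x, b)) y) = 0) :
    ∀ t₁ t₂ : ℝ,
      (∫ p : ℝ × ℝ, ∑ i : Fin N, (u t₁ p i) ^ 2)
        = ∫ p : ℝ × ℝ, ∑ i : Fin N, (u t₂ p i) ^ 2 := by
  suffices hmain : ∀ t₁ t₂ : ℝ, t₁ ≤ t₂ →
      (∫ p : ℝ × ℝ, ∑ i : Fin N, (u t₁ p i) ^ 2)
        = ∫ p : ℝ × ℝ, ∑ i : Fin N, (u t₂ p i) ^ 2 by
    intro t₁ t₂
    rcases le_total t₁ t₂ with h | h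
    · exact hmain t₁ t₂ h
    · exact (hmain t₂ t₁ h).symm
  intro t₁ t₂ ht
  set F : ℝ × (ℝ × ℝ) → (Fin N → ℝ) := fun q => u q.1 q.2 with hFdef
  have hFd : Differentiable ℝ F := hreg.differentiable one_ne_zero
  have hFc : Continuous F := hreg.continuous
  have hDc : Continuous (fun q => fderiv ℝ F q) := hreg.continuous_fderiv one_ne_zero
  have hDvc : ∀ v : ℝ × (ℝ × ℝ), Continuous (fun q => fderiv ℝ F q v) :=
    fun v => hDc.clm_apply continuous_const
  have hDvci : ∀ (v : ℝ × (ℝ × ℝ)) (i : Fin N),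
      Continuous (fun q => fderiv ℝ F q v i) :=
    fun v i => (continuous_apply i).comp (hDvc v)
  have hFci : ∀ i : Fin N, Continuous (fun q => F q i) :=
    fun i => (continuous_apply i).comp hFc
  have hMvc : ∀ (M : Matrix (Fin N) (Fin N) ℝ) (v : ℝ × (ℝ × ℝ)) (i : Fin N),
      Continuous (fun q => (M.mulVec (fderiv ℝ F q v)) i) := by
    intro M v i
    simp only [Matrix.mulVec, dotProduct]
    exact continuous_finset_sum _ fun j _ => continuous_const.mul (hDvci v j)
  -- partial derivatives
  have hHt : ∀ (t : ℝ) (p : ℝ × ℝ),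
      HasDerivAt (fun s => u s p) (fderiv ℝ F (t, p) (1, 0)) t := by
    intro t p
    have h1 : HasDerivAt (fun s : ℝ => (s, p)) ((1 : ℝ), (0 : ℝ × ℝ)) t :=
      (hasDerivAt_id t).prodMk (hasDerivAt_const t p)
    exact (hFd (t, p)).hasFDerivAt.comp_hasDerivAt t h1
  have hHx : ∀ (t x y : ℝ),
      HasDerivAt (fun a => u t (a, y)) (fderiv ℝ F (t, (x, y)) (0, 1, 0)) x := by
    intro t x y
    have h1 : HasDerivAt (fun a : ℝ => (t, (a, y))) ((0 : ℝ), ((1 : ℝ), (0 : ℝ))) x :=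
      (hasDerivAt_const x t).prodMk ((hasDerivAt_id x).prodMk (hasDerivAt_const x y))
    exact (hFd (t, (x, y))).hasFDerivAt.comp_hasDerivAt x h1
  have hHy : ∀ (t x y : ℝ),
      HasDerivAt (fun b => u t (x, b)) (fderiv ℝ F (t, (x, y)) (0, 0, 1)) y := by
    intro t x y
    have h1 : HasDerivAt (fun b : ℝ => (t, (x, b))) ((0 : ℝ), ((0 : ℝ), (1 : ℝ))) y :=
      (hasDerivAt_const y t).prodMk ((hasDerivAt_const y x).prodMk (hasDerivAt_id y))
    exact (hFd (t, (x, y))).hasFDerivAt.comp_hasDerivAt y h1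
  -- PDE in fderiv form
  have hPDE' : ∀ (t : ℝ) (p : ℝ × ℝ),
      fderiv ℝ F (t, p) (1, 0)
        = -(Mx.mulVec (fderiv ℝ F (t, p) (0, 1, 0))
            + My.mulVec (fderiv ℝ F (t, p) (0, 0, 1))) := by
    intro t p
    have h := hPDE t p.1 p.2
    rw [(hHt t (p.1, p.2)).deriv, (hHx t p.1 p.2).deriv, (hHy t p.1 p.2).deriv] at h
    simp only [Prod.mk.eta] at h
    exact eq_neg_of_add_eq_zero_left (by rw [add_assoc] at h; exact h)
  -- vanishing of derivatives off K
  have hD0 : ∀ (t : ℝ) (p : ℝ × ℝ), p ∉ K → fderiv ℝ F (t, p) = 0 := by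
    intro t p hp
    have hopen : IsOpen ((Set.univ : Set ℝ) ×ˢ Kᶜ) :=
      isOpen_univ.prod hK.isClosed.isOpen_compl
    have hev : F =ᶠ[nhds (t, p)] (fun _ => 0) := by
      filter_upwards [hopen.mem_nhds (by simp [hp])] with q hq
      exact hsupp q.1 q.2 hq.2
    rw [hev.fderiv_eq]
    exact fderiv_const_apply 0
  -- integrability helper
  have hCS : ∀ h : ℝ × ℝ → ℝ, (∀ p ∉ K, h p = 0) → Continuous h →
      Integrable h (volume : Measure (ℝ × ℝ)) := fun h h0 hc =>
    hc.integrable_of_hasCompactSupport (HasCompactSupport.intro hK h0)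
  -- bound for K
  obtain ⟨R, hR⟩ := hK.isBounded.subset_closedBall 0
  have hKR : ∀ (x y : ℝ), R < |x| ∨ R < |y| → (x, y) ∉ K := by
    intro x y hxy hmem
    have := hR hmem
    rw [Metric.mem_closedBall] at this
    have hd : dist ((x, y) : ℝ × ℝ) 0 = max (dist x 0) (dist y 0) := rfl
    simp only [Real.dist_eq, sub_zero] at hd
    rw [hd] at this
    rcases hxy with h | h
    · exact absurd (le_trans (le_max_left _ _) this) (not_le.2 h)
    · exact absurd (le_trans (le_max_right _ _) this) (not_le.2 h)
  -- quadratic quantities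
  set Gx : ℝ × (ℝ × ℝ) → ℝ :=
    fun q => 2 * ∑ i, F q i * (Mx.mulVec (fderiv ℝ F q (0, 1, 0))) i with hGxdef
  set Gy : ℝ × (ℝ × ℝ) → ℝ :=
    fun q => 2 * ∑ i, F q i * (My.mulVec (fderiv ℝ F q (0, 0, 1))) i with hGydef
  set g : ℝ × (ℝ × ℝ) → ℝ :=
    fun q => 2 * ∑ i, F q i * fderiv ℝ F q (1, 0) i with hgdef
  have hGxc : Continuous Gx :=
    continuous_const.mul (continuous_finset_sum _ fun i _ => (hFci i).mul (hMvc Mx _ i))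
  have hGyc : Continuous Gy :=
    continuous_const.mul (continuous_finset_sum _ fun i _ => (hFci i).mul (hMvc My _ i))
  have hgc : Continuous g :=
    continuous_const.mul (continuous_finset_sum _ fun i _ => (hFci i).mul (hDvci _ i))
  have hg0 : ∀ (t : ℝ) (p : ℝ × ℝ), p ∉ K → g (t, p) = 0 := by
    intro t p hp
    simp [hgdef, hD0 t p hp]
  have hGx0 : ∀ (t : ℝ) (p : ℝ × ℝ), p ∉ K → Gx (t, p) = 0 := by
    intro t p hp
    simp [hGxdef, hD0 t p hp, Matrix.mulVec_zero]
  have hGy0 : ∀ (t : ℝ) (p : ℝ × ℝ), p ∉ K → Gy (t, p) = 0 := by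
    intro t p hp
    simp [hGydef, hD0 t p hp, Matrix.mulVec_zero]
  have hgsplit : ∀ (t : ℝ) (p : ℝ × ℝ), g (t, p) = -Gx (t, p) - Gy (t, p) := by
    intro t p
    simp only [hgdef, hGxdef, hGydef, hPDE' t p, Pi.add_apply, Pi.neg_apply, mul_neg,
      mul_add, Finset.sum_add_distrib, Finset.sum_neg_distrib]
    ring
  -- vanishing of each spatial integral
  have hzero : ∀ t : ℝ, (∫ p : ℝ × ℝ, g (t, p)) = 0 := by
    intro t
    have hIx : Integrable (fun p : ℝ × ℝ => Gx (t, p)) volume :=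
      hCS _ (fun p hp => hGx0 t p hp) (hGxc.comp (continuous_const.prodMk continuous_id))
    have hIy : Integrable (fun p : ℝ × ℝ => Gy (t, p)) volume :=
      hCS _ (fun p hp => hGy0 t p hp) (hGyc.comp (continuous_const.prodMk continuous_id))
    have hx0 : (∫ p : ℝ × ℝ, Gx (t, p)) = 0 := by
      rw [Measure.volume_eq_prod] at hIx ⊢
      rw [MeasureTheory.integral_prod_symm _ hIx]
      have hinner : ∀ y : ℝ, (∫ x : ℝ, Gx (t, (x, y))) = 0 := by
        intro y
        refine integral_deriv_zero_of_support R
          (f := fun x => ∑ i, u t (x, y) i * (Mx.mulVec (u t (x, y))) i)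
          (fun x => quad_hasDerivAt hMx (hHx t x y)) ?_ ?_
        · exact hGxc.comp (continuous_const.prodMk (continuous_id.prodMk continuous_const))
        · intro x hx
          have h0 := hsupp t (x, y) (hKR x y (Or.inl hx))
          simp [h0]
      simp only [hinner, integral_zero]
    have hy0 : (∫ p : ℝ × ℝ, Gy (t, p)) = 0 := by
      rw [Measure.volume_eq_prod] at hIy ⊢
      rw [MeasureTheory.integral_prod _ hIy]
      have hinner : ∀ x : ℝ, (∫ y : ℝ, Gy (t, (x, y))) = 0 := by
        intro x
        refine integral_deriv_zero_of_support R
          (f := fun y => ∑ i, u t (x, y) i * (My.mulVec (u t (x, y))) i)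
          (fun y => quad_hasDerivAt hMy (hHy t x y)) ?_ ?_
        · exact hGyc.comp (continuous_const.prodMk (continuous_const.prodMk continuous_id))
        · intro y hy
          have h0 := hsupp t (x, y) (hKR x y (Or.inr hy))
          simp [h0]
      simp only [hinner, integral_zero]
    calc (∫ p : ℝ × ℝ, g (t, p)) = ∫ p : ℝ × ℝ, (-Gx (t, p) - Gy (t, p)) := by
          simp only [hgsplit]
      _ = (∫ p : ℝ × ℝ, -Gx (t, p)) - ∫ p : ℝ × ℝ, Gy (t, p) := integral_sub hIx.neg hIy
      _ = -(∫ p : ℝ × ℝ, Gx (t, p)) - ∫ p : ℝ × ℝ, Gy (t, p) := by rw [integral_neg]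
      _ = 0 := by rw [hx0, hy0]; ring
  -- integrability of the squared norm
  have hfint : ∀ t : ℝ, Integrable (fun p : ℝ × ℝ => ∑ i, (u t p i) ^ 2) volume := by
    intro t
    refine hCS _ (fun p hp => ?_) ?_
    · rw [hsupp t p hp]; simp
    · exact continuous_finset_sum _ fun i _ =>
        ((hFci i).comp (continuous_const.prodMk continuous_id)).pow 2
  -- fundamental theorem of calculus in time
  have hftc : ∀ p : ℝ × ℝ,
      (∑ i, (u t₂ p i) ^ 2) - (∑ i, (u t₁ p i) ^ 2) = ∫ s in Set.Ioc t₁ t₂, g (s, p) := by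
    intro p
    rw [← intervalIntegral.integral_of_le ht]
    refine (intervalIntegral.integral_eq_sub_of_hasDerivAt
      (fun s _ => sq_sum_hasDerivAt (hHt s p)) ?_).symm
    exact (hgc.comp (continuous_id.prodMk continuous_const)).intervalIntegrable _ _
  -- Fubini
  have hswap : (∫ p : ℝ × ℝ, ∫ s in Set.Ioc t₁ t₂, g (s, p))
      = ∫ s in Set.Ioc t₁ t₂, ∫ p : ℝ × ℝ, g (s, p) := by
    apply MeasureTheory.integral_integral_swap
    have hmeas : (volume : Measure ((ℝ × ℝ) × ℝ)).restrict (Set.univ ×ˢ Set.Ioc t₁ t₂)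
        = ((volume : Measure (ℝ × ℝ)).prod (volume.restrict (Set.Ioc t₁ t₂))) := by
      rw [Measure.volume_eq_prod (ℝ × ℝ) ℝ, ← Measure.prod_restrict, Measure.restrict_univ]
    rw [show Function.uncurry (fun (p : ℝ × ℝ) (s : ℝ) => g (s, p))
        = fun z : (ℝ × ℝ) × ℝ => g (z.2, z.1) from rfl, ← hmeas]
    have hSc : IsCompact (K ×ˢ Set.Icc t₁ t₂) := hK.prod isCompact_Icc
    have hHcont : Continuous (fun z : (ℝ × ℝ) × ℝ => g (z.2, z.1)) :=
      hgc.comp (continuous_snd.prodMk continuous_fst)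
    have hIS : IntegrableOn (fun z : (ℝ × ℝ) × ℝ => g (z.2, z.1)) (K ×ˢ Set.Icc t₁ t₂)
        volume := hHcont.continuousOn.integrableOn_compact hSc
    have hind : Integrable ((K ×ˢ Set.Icc t₁ t₂).indicator
        (fun z : (ℝ × ℝ) × ℝ => g (z.2, z.1))) volume :=
      (integrable_indicator_iff hSc.isClosed.measurableSet).2 hIS
    refine (hind.integrableOn).congr_fun ?_ (MeasurableSet.univ.prod measurableSet_Ioc)
    intro z hz
    by_cases hzS : z ∈ K ×ˢ Set.Icc t₁ t₂
    · simp [Set.indicator_of_mem hzS]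
    · have h2 : z.2 ∈ Set.Icc t₁ t₂ := Set.Ioc_subset_Icc_self hz.2
      have h1 : z.1 ∉ K := fun h => hzS ⟨h, h2⟩
      rw [Set.indicator_of_notMem hzS]
      exact (hg0 z.2 z.1 h1).symm
  -- conclusion
  have hfin : (∫ p : ℝ × ℝ, ∑ i, (u t₂ p i) ^ 2) - (∫ p : ℝ × ℝ, ∑ i, (u t₁ p i) ^ 2) = 0 := by
    rw [← integral_sub (hfint t₂) (hfint t₁)]
    calc (∫ p : ℝ × ℝ, ((∑ i, (u t₂ p i) ^ 2) - ∑ i, (u t₁ p i) ^ 2))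
        = ∫ p : ℝ × ℝ, ∫ s in Set.Ioc t₁ t₂, g (s, p) := by simp only [hftc]
      _ = ∫ s in Set.Ioc t₁ t₂, ∫ p : ℝ × ℝ, g (s, p) := hswap
      _ = 0 := by simp only [hzero, integral_zero]
  linarith
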